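/- Define T : ℕ × ℕ → Ordinal by: T(1,m) = 0 and T(2,m) = ω for all m, and for n ≥ 3, T(n,m) is any function satisfying T(n,m) ≤ 2ω + max over 1 ≤ i ≤ n-1 of (T(i, n+m-i) + T(n-i, m+i)). Then for all n ≥ 1 and m ≥ 0, T(n,m) ≤ (2n-3)·ω, where for n = 1 we interpret (2n-3)·ω as 0. -/

import Mathlib

open Ordinal in
theorem robertson_webb_recurrence_bound (T : ℕ → ℕ → Ordinal)
    (h1 : ∀ m, T 1 m = 0) (h2 : ∀ m, T 2 m = ω)
    (h3 : ∀ n m, 3 ≤ n →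
      T n m ≤ ω * 2 + (Finset.Icc 1 (n - 1)).sup (fun i => T i (n + m - i) + T (n - i) (m + i))) :
    ∀ n m, 1 ≤ n → T n m ≤ ω * (2 * n - 3 : ℕ) := by
  intro n
  induction n using Nat.strong_induction_on with
  | _ n ih =>
    intro m hn
    rcases Nat.lt_or_ge n 3 with h | h
    · interval_cases n
      · simp [h1]
      · rw [h2]
        have h21 : ((2 * 2 - 3 : ℕ) : Ordinal) = 1 := by norm_num
        rw [h21, mul_one]
    · refine (h3 n m h).trans ?_
      have hsup : (Finset.Icc 1 (n - 1)).sup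
          (fun i => T i (n + m - i) + T (n - i) (m + i)) ≤ ω * ((2 * n - 5 : ℕ) : Ordinal) := by
        apply Finset.sup_le
        intro i hi
        simp only [Finset.mem_Icc] at hi
        have b1 : T i (n + m - i) ≤ ω * ((2 * i - 3 : ℕ) : Ordinal) :=
          ih i (by omega) _ hi.1
        have b2 : T (n - i) (m + i) ≤ ω * ((2 * (n - i) - 3 : ℕ) : Ordinal) :=
          ih (n - i) (by omega) _ (by omega)
        calc T i (n + m - i) + T (n - i) (m + i)
            ≤ ω * ((2 * i - 3 : ℕ) : Ordinal) + ω * ((2 * (n - i) - 3 : ℕ) : Ordinal) :=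
              add_le_add b1 b2
          _ = ω * (((2 * i - 3) + (2 * (n - i) - 3) : ℕ) : Ordinal) := by
              rw [Nat.cast_add, mul_add]
          _ ≤ ω * ((2 * n - 5 : ℕ) : Ordinal) := by
              apply mul_le_mul_right
              have hle : (2 * i - 3) + (2 * (n - i) - 3) ≤ 2 * n - 5 := by omega
              exact_mod_cast Nat.cast_le.mpr hle
      refine le_trans (add_le_add_right hsup _) ?_
      have key : ω * 2 + ω * ((2 * n - 5 : ℕ) : Ordinal) = ω * ((2 * n - 3 : ℕ) : Ordinal) := by
        rw [← mul_add]
        congr 1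
        have h2c : ((2 : Ordinal)) = ((2 : ℕ) : Ordinal) := by norm_num
        rw [h2c, ← Nat.cast_add]
        congr 1
        omega
      rw [key]
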